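/- Let λ be a partition of n = p + q, written λ = (i_1^{m(i_1)}, …, i_k^{m(i_k)}) with distinct parts i_1 > ⋯ > i_k > 0. For 1 ≤ s ≤ m let r_s be the number of distinct values among λ_1, …, λ_{k_s} (so 0 ≤ r_1 < r_2 < ⋯ < r_m ≤ k, with r_1 = 0 when all parts of λ are even; set r_0 = 0). Then there is an isomorphism of graphs Γ(λ;p,q) ≅ ⨿_{𝐩 = (p_1,…,p_m) ∈ P(λ;p,q)} Z_𝐩, where Z_𝐩 = A(m(i_1), …, m(i_{r_1}); p_1) × A(m(i_{r_1+1}), …, m(i_{r_2}); p_2) × ⋯ × A(m(i_{r_{m−1}+1}), …, m(i_{r_m}); p_m) × C(m(i_{r_m+1}), …, m(i_k)), the factor C(…) being omitted (taken to be the one-point graph) when r_m = k, and an empty-parameter factor A(;0) being the one-point graph. -/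

import Mathlib

open Finset

/-- A partition of `n`, given by the function `l` listing its parts in weakly
decreasing order: `l j = λ_j` is the `j`-th part for `1 ≤ j ≤ len`, and
`l j = 0` for `j > len`. -/
structure PartitionData : Type where
  l : ℕ → ℕ
  len : ℕ
  anti : ∀ j, 1 ≤ j → l (j + 1) ≤ l j
  pos : ∀ j, 1 ≤ j → (0 < l j ↔ j ≤ len)

namespace PartitionData

/-- The multiplicity `m(i)` of `i` as a part of the partition. -/
def mult (P : PartitionData) (i : ℕ) : ℕ :=
  ((Finset.Icc 1 P.len).filter (fun j => P.l j = i)).card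

/-- The finite set of (distinct) parts of the partition. -/
def partsSet (P : PartitionData) : Finset ℕ :=
  (Finset.Icc 1 P.len).image P.l

/-- The sum of the parts (i.e. the number `n` the partition partitions). -/
def boxSum (P : PartitionData) : ℕ := ∑ j ∈ Finset.Icc 1 P.len, P.l j

/-- The number of odd parts of the partition. -/
def oddCount (P : PartitionData) : ℕ :=
  ((Finset.Icc 1 P.len).filter (fun j => Odd (P.l j))).card

end PartitionData

/-- A signed Young diagram of shape `P` and signature `(p, q)`, encoded by the
function `f` sending each part length `i` to `m_T⁺(i)`, the number of rows of
length `i` whose leading sign is `+`.  A row of length `i` with leading sign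
`+` has `(i+1)/2` plus-boxes and `i/2` minus-boxes, and vice versa. -/
structure SYD (P : PartitionData) (p q : ℕ) : Type where
  f : ℕ → ℕ
  le_mult : ∀ i, f i ≤ P.mult i
  plus_eq : ∑ i ∈ P.partsSet, (f i * ((i + 1) / 2) + (P.mult i - f i) * (i / 2)) = p
  minus_eq : ∑ i ∈ P.partsSet, (f i * (i / 2) + (P.mult i - f i) * ((i + 1) / 2)) = q

/-- `i` and `j` are consecutive distinct parts: `i > j` with no part strictly
in between (so if the distinct parts are `i_1 > ⋯ > i_k`, the pairs are
`(i_r, i_{r+1})`). -/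
def Consec (P : PartitionData) (i j : ℕ) : Prop :=
  i ∈ P.partsSet ∧ j ∈ P.partsSet ∧ j < i ∧ ∀ x ∈ P.partsSet, ¬ (j < x ∧ x < i)

/-- `j` is the smallest part `i_k`. -/
def IsMinPart (P : PartitionData) (j : ℕ) : Prop :=
  j ∈ P.partsSet ∧ ∀ x ∈ P.partsSet, j ≤ x

/-- Adjacency of signed Young diagrams with step `c`:
`π(T) - π(T') ∈ {±c(e_r - e_{r+1})} ∪ {±c e_k}` in the coordinates indexed by
the distinct parts `i_1 > ⋯ > i_k`. -/
def AdjRel (P : PartitionData) {p q : ℕ} (c : ℕ) (T T' : SYD P p q) : Prop :=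
  (∃ i j, Consec P i j ∧ (∀ x, x ≠ i → x ≠ j → T.f x = T'.f x) ∧
    ((T.f i = T'.f i + c ∧ T'.f j = T.f j + c) ∨
      (T'.f i = T.f i + c ∧ T.f j = T'.f j + c)))
  ∨ (∃ j, IsMinPart P j ∧ (∀ x, x ≠ j → T.f x = T'.f x) ∧
      (T.f j = T'.f j + c ∨ T'.f j = T.f j + c))

/-- The orbit graph `Γ(λ;p,q)` (type AIII). -/
def orbitGraph (P : PartitionData) (p q : ℕ) : SimpleGraph (SYD P p q) :=
  SimpleGraph.fromRel (AdjRel P 1)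

/-- The set `{j : 1 ≤ j ≤ ℓ, λ_j - λ_{j+1} odd}` defining `k_1 < ⋯ < k_m`. -/
def Kset (P : PartitionData) : Finset ℕ :=
  (Finset.Icc 1 P.len).filter (fun j => Odd (P.l j - P.l (j + 1)))

/-- The parameter set `P(λ;p,q)`. -/
def Pset (P : PartitionData) (p q m : ℕ) (k : ℕ → ℕ) : Set (ℕ → ℕ) :=
  {ps | (∀ s, ¬ (1 ≤ s ∧ s ≤ m) → ps s = 0) ∧
    (∀ s, 1 ≤ s → s ≤ m → ps s ≤ k s - k (s - 1)) ∧
    2 * (∑ s ∈ (Finset.Icc 1 m).filter (fun s => 1 ≤ k s ∧ Odd (P.l (k s))),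
        (ps s : ℤ)) - (P.oddCount : ℤ) = (p : ℤ) - (q : ℤ)}

/-- The edge relation of the box product
`A(m(i_1),…,m(i_{r_1}); p_1) × ⋯ × A(…; p_m) × C(m(i_{r_m+1}),…,m(i_{k'}))`:
two tuples are adjacent iff they differ by `±(e_t - e_{t+1})` with `t, t+1` in
the same block (blocks `(r_{s-1}, r_s]` for the `A` factors, `(r_m, k']` for
the `C` factor), or by `±e_{k'}` if the `C` factor is present (`r_m < k'`). -/
def MoveRel (k' m : ℕ) (r : ℕ → ℕ) (a b : ℕ → ℕ) : Prop :=
  (∃ t, 1 ≤ t ∧ t + 1 ≤ k' ∧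
    ((∃ s, 1 ≤ s ∧ s ≤ m ∧ r (s - 1) < t ∧ t + 1 ≤ r s) ∨ r m < t) ∧
    (∀ x, x ≠ t → x ≠ t + 1 → a x = b x) ∧
    ((a t = b t + 1 ∧ b (t + 1) = a (t + 1) + 1) ∨
      (b t = a t + 1 ∧ a (t + 1) = b (t + 1) + 1)))
  ∨ (r m < k' ∧ (∀ x, x ≠ k' → a x = b x) ∧ (a k' = b k' + 1 ∨ b k' = a k' + 1))

/-- The vertex condition of the product graph `Z_𝐩`: tuples
`(a_1, …, a_{k'})` with `0 ≤ a_t ≤ m(i_t)` whose block sums are prescribed by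
`𝐩` (for the `A` factors; the coordinates in `(r_m, k']` belonging to the `C`
factor are unconstrained). -/
def ZCond (P : PartitionData) (k' m : ℕ) (iseq r : ℕ → ℕ) (ps a : ℕ → ℕ) : Prop :=
  (∀ t, ¬ (1 ≤ t ∧ t ≤ k') → a t = 0) ∧
  (∀ t, 1 ≤ t → t ≤ k' → a t ≤ P.mult (iseq t)) ∧
  (∀ s, 1 ≤ s → s ≤ m → ∑ t ∈ Finset.Icc (r (s - 1) + 1) (r s), a t = ps s)


section Helpers

lemma half_succ (i : ℕ) : (i + 1) / 2 = i / 2 + (if Odd i then 1 else 0) := by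
  rcases Nat.even_or_odd i with h | h
  · rw [if_neg (by simpa [Nat.not_odd_iff_even] using h)]
    obtain ⟨n, rfl⟩ := h; omega
  · rw [if_pos h]; obtain ⟨n, rfl⟩ := h; omega

lemma sum_eq_of_agree_two {S : Finset ℕ} {g g' : ℕ → ℕ} {t u : ℕ} (ht : t ∈ S) (hu : u ∈ S)
    (htu : t ≠ u) (hagree : ∀ x, x ≠ t → x ≠ u → g x = g' x)
    (hval : g t + g u = g' t + g' u) : ∑ x ∈ S, g x = ∑ x ∈ S, g' x := by
  have hu' : u ∈ S.erase t := Finset.mem_erase.mpr ⟨htu.symm, hu⟩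
  rw [← Finset.add_sum_erase S g ht, ← Finset.add_sum_erase S g' ht,
    ← Finset.add_sum_erase _ g hu', ← Finset.add_sum_erase _ g' hu']
  have : ∑ x ∈ (S.erase t).erase u, g x = ∑ x ∈ (S.erase t).erase u, g' x := by
    refine Finset.sum_congr rfl fun x hx => ?_
    exact hagree x (Finset.ne_of_mem_erase (Finset.mem_of_mem_erase hx))
      (Finset.ne_of_mem_erase hx)
  omega

namespace PartitionData

variable (P : PartitionData)

lemma l_anti' : ∀ j1 j2 : ℕ, 1 ≤ j1 → j1 ≤ j2 → P.l j2 ≤ P.l j1 := by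
  intro j1 j2 h1 h12
  induction j2 with
  | zero => omega
  | succ n ih =>
    rcases Nat.lt_or_ge j1 (n+1) with h | h
    · exact le_trans (P.anti n (by omega)) (ih (by omega))
    · have : j1 = n + 1 := by omega
      simp [this]

lemma l_zero {j : ℕ} (h1 : 1 ≤ j) (h2 : P.len < j) : P.l j = 0 := by
  have := P.pos j h1
  omega

lemma mem_partsSet {i : ℕ} : i ∈ P.partsSet ↔ ∃ j, 1 ≤ j ∧ j ≤ P.len ∧ P.l j = i := by
  simp [partsSet, Finset.mem_image, Finset.mem_Icc, and_assoc]

lemma mult_eq_zero {i : ℕ} (h : i ∉ P.partsSet) : P.mult i = 0 := by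
  rw [mult, Finset.card_eq_zero, Finset.filter_eq_empty_iff]
  intro j hj hlj
  exact h (P.mem_partsSet.mpr ⟨j, (Finset.mem_Icc.mp hj).1, (Finset.mem_Icc.mp hj).2, hlj⟩)

lemma sum_group (F : ℕ → ℕ) :
    ∑ j ∈ Finset.Icc 1 P.len, F (P.l j) = ∑ i ∈ P.partsSet, P.mult i * F i := by
  rw [Finset.sum_comp F P.l]
  rfl

lemma boxSum_eq : P.boxSum = ∑ i ∈ P.partsSet, P.mult i * i := by
  have := P.sum_group id
  simpa [boxSum] using this

lemma oddCount_eq :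
    P.oddCount = ∑ i ∈ P.partsSet.filter (fun i => Odd i), P.mult i := by
  have h1 : P.oddCount = ∑ j ∈ Finset.Icc 1 P.len, (if Odd (P.l j) then 1 else 0) := by
    rw [oddCount, Finset.card_filter]
  rw [h1, P.sum_group (fun i => if Odd i then 1 else 0), Finset.sum_filter]
  refine Finset.sum_congr rfl fun i _ => ?_
  split_ifs <;> simp

end PartitionData

/-- plus + minus = boxSum -/
lemma plus_add_minus (P : PartitionData) (f : ℕ → ℕ) (hf : ∀ i, f i ≤ P.mult i) :
    (∑ i ∈ P.partsSet, (f i * ((i + 1) / 2) + (P.mult i - f i) * (i / 2)))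
      + (∑ i ∈ P.partsSet, (f i * (i / 2) + (P.mult i - f i) * ((i + 1) / 2)))
    = P.boxSum := by
  rw [P.boxSum_eq, ← Finset.sum_add_distrib]
  refine Finset.sum_congr rfl fun i _ => ?_
  have h2 : (i + 1) / 2 + i / 2 = i := by omega
  have h3 : f i + (P.mult i - f i) = P.mult i := by have := hf i; omega
  calc f i * ((i + 1) / 2) + (P.mult i - f i) * (i / 2)
        + (f i * (i / 2) + (P.mult i - f i) * ((i + 1) / 2))
      = (f i + (P.mult i - f i)) * ((i + 1) / 2 + i / 2) := by ring
    _ = P.mult i * i := by rw [h2, h3]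

/-- plus - minus = 2 * (sum of f over odd parts) - oddCount, in ℤ -/
lemma plus_sub_minus (P : PartitionData) (f : ℕ → ℕ) (hf : ∀ i, f i ≤ P.mult i) :
    ((∑ i ∈ P.partsSet, (f i * ((i + 1) / 2) + (P.mult i - f i) * (i / 2)) : ℕ) : ℤ)
      - ((∑ i ∈ P.partsSet, (f i * (i / 2) + (P.mult i - f i) * ((i + 1) / 2)) : ℕ) : ℤ)
    = 2 * (∑ i ∈ P.partsSet.filter (fun i => Odd i), (f i : ℤ)) - (P.oddCount : ℤ) := by
  have key : ∀ i ∈ P.partsSet,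
      ((f i * ((i + 1) / 2) + (P.mult i - f i) * (i / 2) : ℕ) : ℤ)
        - ((f i * (i / 2) + (P.mult i - f i) * ((i + 1) / 2) : ℕ) : ℤ)
      = (if Odd i then (2 * (f i : ℤ) - (P.mult i : ℤ)) else 0) := by
    intro i _
    rw [half_succ i]
    split_ifs with h
    · push_cast [Nat.cast_sub (hf i)]; ring
    · push_cast [Nat.cast_sub (hf i)]; ring
  rw [Nat.cast_sum, Nat.cast_sum, ← Finset.sum_sub_distrib, Finset.sum_congr rfl key,
    ← Finset.sum_filter, P.oddCount_eq]
  push_cast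
  rw [Finset.sum_sub_distrib, Finset.mul_sum]
section PartsWorld

/-- number of distinct values among `l 1, ..., l j` -/
def dc (P : PartitionData) (j : ℕ) : ℕ := ((Finset.Icc 1 j).image P.l).card

variable {P : PartitionData} {k' : ℕ} {iseq : ℕ → ℕ}

lemma dc_zero (P : PartitionData) : dc P 0 = 0 := by simp [dc]

lemma dc_mono (P : PartitionData) {j j' : ℕ} (h : j ≤ j') : dc P j ≤ dc P j' :=
  Finset.card_le_card (Finset.image_subset_image (Finset.Icc_subset_Icc_right h))

lemma iseq_mem (hiseqim : (Finset.Icc 1 k').image iseq = P.partsSet) {t : ℕ}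
    (h1 : 1 ≤ t) (h2 : t ≤ k') : iseq t ∈ P.partsSet := by
  rw [← hiseqim]; exact Finset.mem_image_of_mem _ (Finset.mem_Icc.mpr ⟨h1, h2⟩)

lemma iseq_surj (hiseqim : (Finset.Icc 1 k').image iseq = P.partsSet) {i : ℕ}
    (hi : i ∈ P.partsSet) : ∃ t, 1 ≤ t ∧ t ≤ k' ∧ iseq t = i := by
  rw [← hiseqim] at hi
  simpa [Finset.mem_image, Finset.mem_Icc, and_assoc] using hi

lemma iseq_lt (hiseq : StrictAntiOn iseq (Set.Icc 1 k')) {t u : ℕ}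
    (h1 : 1 ≤ t) (h2 : t < u) (h3 : u ≤ k') : iseq u < iseq t :=
  hiseq ⟨h1, by omega⟩ ⟨by omega, h3⟩ h2

lemma iseq_le (hiseq : StrictAntiOn iseq (Set.Icc 1 k')) {t u : ℕ}
    (h1 : 1 ≤ t) (h2 : t ≤ u) (h3 : u ≤ k') : iseq u ≤ iseq t := by
  rcases eq_or_lt_of_le h2 with rfl | h
  · exact le_rfl
  · exact le_of_lt (iseq_lt hiseq h1 h h3)

lemma iseq_inj (hiseq : StrictAntiOn iseq (Set.Icc 1 k')) {t u : ℕ}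
    (ht : 1 ≤ t ∧ t ≤ k') (hu : 1 ≤ u ∧ u ≤ k') (h : iseq t = iseq u) : t = u := by
  rcases lt_trichotomy t u with hlt | he | hlt
  · exact absurd (iseq_lt hiseq ht.1 hlt hu.2) (by omega)
  · exact he
  · exact absurd (iseq_lt hiseq hu.1 hlt ht.2) (by omega)

lemma filter_card (hiseq : StrictAntiOn iseq (Set.Icc 1 k'))
    (hiseqim : (Finset.Icc 1 k').image iseq = P.partsSet) {t : ℕ}
    (h1 : 1 ≤ t) (h2 : t ≤ k') :
    (P.partsSet.filter (fun x => iseq t ≤ x)).card = t := by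
  have him : P.partsSet.filter (fun x => iseq t ≤ x) = (Finset.Icc 1 t).image iseq := by
    ext x
    simp only [Finset.mem_filter, Finset.mem_image, Finset.mem_Icc]
    constructor
    · rintro ⟨hx, hle⟩
      obtain ⟨u, hu1, hu2, rfl⟩ := iseq_surj hiseqim hx
      refine ⟨u, ⟨hu1, ?_⟩, rfl⟩
      by_contra hc
      exact absurd (iseq_lt hiseq h1 (by omega) hu2) (by omega)
    · rintro ⟨u, ⟨hu1, hu2⟩, rfl⟩
      exact ⟨iseq_mem hiseqim hu1 (le_trans hu2 h2), iseq_le hiseq hu1 hu2 h2⟩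
  rw [him, Finset.card_image_of_injOn, Nat.card_Icc]
  · omega
  · intro x hx y hy hxy
    simp only [Finset.coe_Icc, Set.mem_Icc] at hx hy
    exact iseq_inj hiseq ⟨hx.1, le_trans hx.2 h2⟩ ⟨hy.1, le_trans hy.2 h2⟩ hxy

lemma l_mem_partsSet {j : ℕ} (h1 : 1 ≤ j) (h2 : j ≤ P.len) : P.l j ∈ P.partsSet :=
  P.mem_partsSet.mpr ⟨j, h1, h2, rfl⟩

lemma dc_im {j : ℕ} (h1 : 1 ≤ j) (h2 : j ≤ P.len) :
    (Finset.Icc 1 j).image P.l = P.partsSet.filter (fun x => P.l j ≤ x) := by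
  ext x
  simp only [Finset.mem_filter, Finset.mem_image, Finset.mem_Icc]
  constructor
  · rintro ⟨u, ⟨hu1, hu2⟩, rfl⟩
    exact ⟨l_mem_partsSet hu1 (le_trans hu2 h2), P.l_anti' u j hu1 hu2⟩
  · rintro ⟨hx, hle⟩
    obtain ⟨u, hu1, hu2, rfl⟩ := P.mem_partsSet.mp hx
    rcases le_or_gt u j with h | h
    · exact ⟨u, ⟨hu1, h⟩, rfl⟩
    · exact ⟨j, ⟨h1, le_rfl⟩, le_antisymm hle (P.l_anti' j u h1 (le_of_lt h))⟩

lemma dc_val (hiseq : StrictAntiOn iseq (Set.Icc 1 k'))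
    (hiseqim : (Finset.Icc 1 k').image iseq = P.partsSet) {j : ℕ}
    (h1 : 1 ≤ j) (h2 : j ≤ P.len) :
    1 ≤ dc P j ∧ dc P j ≤ k' ∧ iseq (dc P j) = P.l j := by
  obtain ⟨t, ht1, ht2, ht3⟩ := iseq_surj hiseqim (l_mem_partsSet h1 h2)
  have hdc : dc P j = t := by
    rw [dc, dc_im h1 h2, ← ht3, filter_card hiseq hiseqim ht1 ht2]
  exact ⟨by omega, by omega, by rw [hdc, ht3]⟩

lemma dc_eq_iff (hiseq : StrictAntiOn iseq (Set.Icc 1 k'))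
    (hiseqim : (Finset.Icc 1 k').image iseq = P.partsSet) {j t : ℕ}
    (h1 : 1 ≤ j) (h2 : j ≤ P.len) (ht1 : 1 ≤ t) (ht2 : t ≤ k') :
    P.l j = iseq t ↔ dc P j = t := by
  obtain ⟨hd1, hd2, hd3⟩ := dc_val hiseq hiseqim h1 h2
  constructor
  · intro h
    exact iseq_inj hiseq ⟨hd1, hd2⟩ ⟨ht1, ht2⟩ (by rw [hd3, h])
  · intro h
    rw [← hd3, h]

lemma dc_lt {j j' : ℕ} (h1 : 1 ≤ j) (hjj' : j < j') (h2 : j' ≤ P.len)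
    (hlt : P.l j' < P.l j) : dc P j < dc P j' := by
  rw [dc, dc, dc_im h1 (by omega), dc_im (by omega) h2]
  apply Finset.card_lt_card
  rw [Finset.ssubset_iff_of_subset]
  · exact ⟨P.l j', Finset.mem_filter.mpr ⟨l_mem_partsSet (by omega) h2, le_rfl⟩,
      by simp only [Finset.mem_filter]; omega⟩
  · intro x hx
    simp only [Finset.mem_filter] at hx ⊢
    exact ⟨hx.1, by omega⟩

lemma dc_surj (hiseq : StrictAntiOn iseq (Set.Icc 1 k'))
    (hiseqim : (Finset.Icc 1 k').image iseq = P.partsSet) {t : ℕ}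
    (ht1 : 1 ≤ t) (ht2 : t ≤ k') :
    ∃ j, 1 ≤ j ∧ j ≤ P.len ∧ dc P j = t ∧ P.l j = iseq t := by
  obtain ⟨j, h1, h2, h3⟩ := P.mem_partsSet.mp (iseq_mem hiseqim ht1 ht2)
  exact ⟨j, h1, h2, (dc_eq_iff hiseq hiseqim h1 h2 ht1 ht2).mp h3, h3⟩

lemma mult_fiber (hiseq : StrictAntiOn iseq (Set.Icc 1 k'))
    (hiseqim : (Finset.Icc 1 k').image iseq = P.partsSet) {t : ℕ}
    (ht1 : 1 ≤ t) (ht2 : t ≤ k') :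
    P.mult (iseq t) = ((Finset.Icc 1 P.len).filter (fun j => dc P j = t)).card := by
  rw [PartitionData.mult]
  congr 1
  apply Finset.filter_congr
  intro j hj
  simp only [Finset.mem_Icc] at hj
  exact dc_eq_iff hiseq hiseqim hj.1 hj.2 ht1 ht2

end PartsWorld
section PosWorld

variable {P : PartitionData}

lemma Kset_mem {x : ℕ} (hx : x ∈ Kset P) :
    1 ≤ x ∧ x ≤ P.len ∧ Odd (P.l x - P.l (x + 1)) := by
  simp only [Kset, Finset.mem_filter, Finset.mem_Icc] at hx
  tauto

lemma even_tail (P : PartitionData) :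
    ∀ c j, P.len + 1 - j ≤ c → 1 ≤ j → (∀ x ∈ Kset P, x < j) → ¬ Odd (P.l j) := by
  intro c
  induction c with
  | zero =>
    intro j hc h1 _
    rw [P.l_zero h1 (by omega)]
    decide
  | succ n ih =>
    intro j hc h1 hgt
    by_cases hle : j ≤ P.len
    · have hnk : j ∉ Kset P := fun hj => absurd (hgt j hj) (lt_irrefl j)
      have hdiff : ¬ Odd (P.l j - P.l (j + 1)) := fun hodd =>
        hnk (Finset.mem_filter.mpr ⟨Finset.mem_Icc.mpr ⟨h1, hle⟩, hodd⟩)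
      have hnext : ¬ Odd (P.l (j + 1)) :=
        ih (j + 1) (by omega) (by omega) (fun x hx => lt_trans (hgt x hx) (by omega))
      have hanti := P.anti j h1
      simp only [Nat.odd_iff] at hdiff hnext ⊢
      omega
    · rw [P.l_zero h1 (by omega)]
      decide

lemma parity_stable (P : PartitionData) :
    ∀ n j j', j' - j ≤ n → 1 ≤ j → j ≤ j' → j' ≤ P.len →
      (∀ x ∈ Kset P, ¬ (j ≤ x ∧ x < j')) → (Odd (P.l j) ↔ Odd (P.l j')) := by
  intro n
  induction n with
  | zero =>
    intro j j' hc h1 hle _ _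
    have : j = j' := by omega
    rw [this]
  | succ n ih =>
    intro j j' hc h1 hle hlen hno
    rcases eq_or_lt_of_le hle with rfl | hlt
    · rfl
    · have hnk : j ∉ Kset P := fun hj => hno j hj ⟨le_rfl, hlt⟩
      have hdiff : ¬ Odd (P.l j - P.l (j + 1)) := fun hodd =>
        hnk (Finset.mem_filter.mpr ⟨Finset.mem_Icc.mpr ⟨h1, by omega⟩, hodd⟩)
      have hnext : Odd (P.l (j + 1)) ↔ Odd (P.l j') :=
        ih (j + 1) j' (by omega) (by omega) (by omega) hlen
          (fun x hx hxb => hno x hx ⟨by omega, hxb.2⟩)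
      have hanti := P.anti j h1
      rw [← hnext]
      simp only [Nat.odd_iff] at hdiff ⊢
      omega

lemma blockfind {r : ℕ → ℕ} (hr0 : r 0 = 0) :
    ∀ n t, 1 ≤ t → t ≤ r n → ∃ s, 1 ≤ s ∧ s ≤ n ∧ r (s - 1) < t ∧ t ≤ r s := by
  intro n
  induction n with
  | zero => intro t h1 h2; omega
  | succ n ih =>
    intro t h1 h2
    rcases le_or_gt t (r n) with h | h
    · obtain ⟨s, hs⟩ := ih t h1 h
      exact ⟨s, hs.1, by omega, hs.2.2⟩
    · exact ⟨n + 1, by omega, le_rfl, by simpa using h, h2⟩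

end PosWorld
section SetupSec

variable {P : PartitionData} {m k' : ℕ} {k iseq r : ℕ → ℕ}

lemma dc_pos {j : ℕ} (h1 : 1 ≤ j) : 1 ≤ dc P j :=
  Finset.card_pos.mpr (Finset.Nonempty.image ⟨j, Finset.mem_Icc.mpr ⟨h1, le_rfl⟩⟩ _)

lemma dc_len (hiseq : StrictAntiOn iseq (Set.Icc 1 k'))
    (hiseqim : (Finset.Icc 1 k').image iseq = P.partsSet) : dc P P.len = k' := by
  have h1 : dc P P.len = P.partsSet.card := rfl
  rw [h1, ← hiseqim, Finset.card_image_of_injOn, Nat.card_Icc]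
  · omega
  · intro x hx y hy hxy
    simp only [Finset.coe_Icc, Set.mem_Icc] at hx hy
    exact iseq_inj hiseq hx hy hxy

/-- Bundle of the block-structure facts, proved separately in the
`Kset = ∅` and `Kset ≠ ∅` cases. -/
structure Setup (P : PartitionData) (m k' : ℕ) (k iseq r : ℕ → ℕ) : Prop where
  rmono : ∀ s s', s ≤ s' → s' ≤ m → r s ≤ r s'
  rmk : r m ≤ k'
  blocksum : ∀ s, 1 ≤ s → s ≤ m →
    ∑ t ∈ Finset.Icc (r (s - 1) + 1) (r s), P.mult (iseq t) = k s - k (s - 1)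
  parity : ∀ s, 1 ≤ s → s ≤ m → ∀ t, r (s - 1) < t → t ≤ r s →
    (Odd (iseq t) ↔ (1 ≤ k s ∧ Odd (P.l (k s))))
  evtail : ∀ t, r m < t → t ≤ k' → ¬ Odd (iseq t)
  boundary : ∀ t, 1 ≤ t → t + 1 ≤ k' → (Odd (iseq t) ↔ Odd (iseq (t + 1))) →
    ((∃ s, 1 ≤ s ∧ s ≤ m ∧ r (s - 1) < t ∧ t + 1 ≤ r s) ∨ r m < t)
  keymin : 1 ≤ k' → ¬ Odd (iseq k') → r m < k'

lemma setup_empty (hiseq : StrictAntiOn iseq (Set.Icc 1 k'))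
    (hiseqim : (Finset.Icc 1 k').image iseq = P.partsSet)
    (hr0 : r 0 = 0) (hr : ∀ s, 1 ≤ s → s ≤ m → r s = dc P (k s))
    (hk0 : k 0 = 0) (hKe : Kset P = ∅) (hm : m = 1) (hk1 : k 1 = 0) :
    Setup P m k' k iseq r := by
  subst hm
  have hr1 : r 1 = 0 := by rw [hr 1 le_rfl le_rfl, hk1, dc_zero]
  have hrs : ∀ s, s ≤ 1 → r s = 0 := by
    intro s hs
    interval_cases s
    · exact hr0
    · exact hr1
  refine ⟨?_, ?_, ?_, ?_, ?_, ?_, ?_⟩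
  · intro s s' h1 h2; rw [hrs s (by omega), hrs s' h2]
  · rw [hr1]; omega
  · intro s h1 h2
    have : s = 1 := by omega
    subst this
    simp [hr1, hr0, hk1, hk0]
  · intro s h1 h2 t ht1 ht2
    have : s = 1 := by omega
    subst this
    rw [hr0] at ht1; rw [hr1] at ht2; omega
  · intro t ht1 ht2
    obtain ⟨j, hj1, hj2, _, hj4⟩ := dc_surj hiseq hiseqim (by omega : 1 ≤ t) ht2
    rw [← hj4]
    exact even_tail P (P.len + 1 - j) j le_rfl hj1 (by simp [hKe])
  · intro t ht1 _ _
    right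
    rw [hr1]; omega
  · intro h1 _
    rw [hr1]; omega

lemma setup_nonempty (hiseq : StrictAntiOn iseq (Set.Icc 1 k'))
    (hiseqim : (Finset.Icc 1 k').image iseq = P.partsSet)
    (hr0 : r 0 = 0) (hr : ∀ s, 1 ≤ s → s ≤ m → r s = dc P (k s))
    (hk0 : k 0 = 0) (hKne : Kset P ≠ ∅)
    (hkmono : StrictMonoOn k (Set.Icc 0 m))
    (hkim : (Finset.Icc 1 m).image k = Kset P) :
    Setup P m k' k iseq r := by
  have hm1 : 1 ≤ m := by
    by_contra h
    have : m = 0 := by omega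
    subst this
    simp at hkim
    exact hKne hkim.symm
  have kmem : ∀ s, 1 ≤ s → s ≤ m → k s ∈ Kset P := by
    intro s h1 h2
    rw [← hkim]
    exact Finset.mem_image_of_mem _ (Finset.mem_Icc.mpr ⟨h1, h2⟩)
  have kbnd : ∀ s, 1 ≤ s → s ≤ m → 1 ≤ k s ∧ k s ≤ P.len ∧ Odd (P.l (k s) - P.l (k s + 1)) :=
    fun s h1 h2 => Kset_mem (kmem s h1 h2)
  have klt : ∀ s s', s < s' → s' ≤ m → k s < k s' := by
    intro s s' h1 h2
    exact hkmono ⟨by omega, by omega⟩ ⟨by omega, by omega⟩ h1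
  have kle : ∀ s s', s ≤ s' → s' ≤ m → k s ≤ k s' := by
    intro s s' h1 h2
    rcases eq_or_lt_of_le h1 with rfl | h
    · exact le_rfl
    · exact le_of_lt (klt s s' h h2)
  have ksurj : ∀ x ∈ Kset P, ∃ s, 1 ≤ s ∧ s ≤ m ∧ k s = x := by
    intro x hx
    rw [← hkim] at hx
    simpa [Finset.mem_image, Finset.mem_Icc, and_assoc] using hx
  have gap : ∀ s, 1 ≤ s → s ≤ m → ∀ x ∈ Kset P, x < k s → x ≤ k (s - 1) := by
    intro s h1 h2 x hx hxs
    obtain ⟨s', hs1, hs2, rfl⟩ := ksurj x hx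
    have : s' < s := by
      by_contra h
      exact absurd (kle s s' (by omega) hs2) (by omega)
    exact kle s' (s - 1) (by omega) (by omega)
  have hlt_next : ∀ s, 1 ≤ s → s ≤ m → P.l (k s + 1) < P.l (k s) := by
    intro s h1 h2
    obtain ⟨hb1, hb2, hb3⟩ := kbnd s h1 h2
    have := P.anti (k s) hb1
    rw [Nat.odd_iff] at hb3
    omega
  have hl_lt : ∀ s, 1 ≤ s → s ≤ m → ∀ j, k s < j → j ≤ P.len → P.l j < P.l (k s) := by
    intro s h1 h2 j hj1 hj2
    have h3 := hlt_next s h1 h2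
    have h4 := P.l_anti' (k s + 1) j (by omega) (by omega)
    omega
  have rstrict : ∀ s s', s < s' → s' ≤ m → r s < r s' := by
    intro s s' h1 h2
    have hrs' : r s' = dc P (k s') := hr s' (by omega) h2
    obtain ⟨hb1, hb2, _⟩ := kbnd s' (by omega) h2
    rcases Nat.eq_zero_or_pos s with rfl | hs
    · rw [hr0, hrs']
      exact dc_pos hb1
    · rw [hr s (by omega) (by omega), hrs']
      obtain ⟨ha1, ha2, _⟩ := kbnd s hs (by omega)
      exact dc_lt ha1 (klt s s' h1 h2) hb2 (hl_lt s hs (by omega) (k s') (klt s s' h1 h2) hb2)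
  have rmono : ∀ s s', s ≤ s' → s' ≤ m → r s ≤ r s' := by
    intro s s' h1 h2
    rcases eq_or_lt_of_le h1 with rfl | h
    · exact le_rfl
    · exact le_of_lt (rstrict s s' h h2)
  have rmk : ∀ s, s ≤ m → r s ≤ k' := by
    intro s hs
    rcases Nat.eq_zero_or_pos s with rfl | h
    · rw [hr0]; omega
    · rw [hr s h hs, ← dc_len hiseq hiseqim]
      exact dc_mono P (kbnd s h hs).2.1
  have cut : ∀ s, s ≤ m → ∀ j, 1 ≤ j → j ≤ P.len → (j ≤ k s ↔ dc P j ≤ r s) := by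
    intro s hs j hj1 hj2
    rcases Nat.eq_zero_or_pos s with rfl | h
    · rw [hk0, hr0]
      have := dc_pos (P := P) hj1
      omega
    · rw [hr s h hs]
      obtain ⟨hb1, hb2, _⟩ := kbnd s h hs
      constructor
      · intro hle
        exact dc_mono P hle
      · intro hle
        by_contra hc
        exact absurd (dc_lt hb1 (by omega) hj2 (hl_lt s h hs j (by omega) hj2)) (by omega)
  have lkm_odd : Odd (P.l (k m)) := by
    obtain ⟨hb1, hb2, hb3⟩ := kbnd m hm1 le_rfl
    have hev : ¬ Odd (P.l (k m + 1)) := by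
      apply even_tail P (P.len + 1 - (k m + 1)) (k m + 1) le_rfl (by omega)
      intro x hx
      obtain ⟨s', hs1, hs2, rfl⟩ := ksurj x hx
      have := kle s' m hs2 le_rfl
      omega
    have := P.anti (k m) hb1
    rw [Nat.odd_iff] at hb3 ⊢
    rw [Nat.odd_iff] at hev
    omega
  have parity : ∀ s, 1 ≤ s → s ≤ m → ∀ t, r (s - 1) < t → t ≤ r s →
      (Odd (iseq t) ↔ (1 ≤ k s ∧ Odd (P.l (k s)))) := by
    intro s h1 h2 t ht1 ht2
    obtain ⟨hb1, hb2, _⟩ := kbnd s h1 h2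
    have htk : t ≤ k' := le_trans ht2 (rmk s h2)
    obtain ⟨j, hj1, hj2, hj3, hj4⟩ := dc_surj hiseq hiseqim (by omega : 1 ≤ t) htk
    have hjk : j ≤ k s := (cut s h2 j hj1 hj2).mpr (by omega)
    have hjk' : ¬ (j ≤ k (s - 1)) := by
      intro hc
      exact absurd ((cut (s - 1) (by omega) j hj1 hj2).mp hc) (by omega)
    have hps : Odd (P.l j) ↔ Odd (P.l (k s)) := by
      apply parity_stable P (k s - j) j (k s) le_rfl hj1 hjk hb2
      intro x hx ⟨hxa, hxb⟩
      exact absurd (gap s h1 h2 x hx hxb) (by omega)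
    rw [← hj4, hps]
    simp [hb1]
  have evtail : ∀ t, r m < t → t ≤ k' → ¬ Odd (iseq t) := by
    intro t ht1 ht2
    obtain ⟨j, hj1, hj2, hj3, hj4⟩ := dc_surj hiseq hiseqim (by omega : 1 ≤ t) ht2
    have hjk : ¬ (j ≤ k m) := by
      intro hc
      exact absurd ((cut m le_rfl j hj1 hj2).mp hc) (by omega)
    rw [← hj4]
    apply even_tail P (P.len + 1 - j) j le_rfl hj1
    intro x hx
    obtain ⟨s', hs1, hs2, rfl⟩ := ksurj x hx
    have := kle s' m hs2 le_rfl
    omega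
  refine ⟨rmono, rmk m le_rfl, ?_, parity, evtail, ?_, ?_⟩
  · -- blocksum
    intro s h1 h2
    obtain ⟨hb1, hb2, _⟩ := kbnd s h1 h2
    have hks : k (s - 1) < k s := by
      rcases Nat.eq_zero_or_pos (s - 1) with he | hp
      · rw [he, hk0]; omega
      · exact klt (s - 1) s (by omega) h2
    have hcard : (Finset.Icc (k (s - 1) + 1) (k s)).card = k s - k (s - 1) := by
      rw [Nat.card_Icc]; omega
    have hfib : (Finset.Icc (k (s - 1) + 1) (k s)).card
        = ∑ t ∈ Finset.Icc (r (s - 1) + 1) (r s),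
            ((Finset.Icc (k (s - 1) + 1) (k s)).filter (fun j => dc P j = t)).card := by
      apply Finset.card_eq_sum_card_fiberwise
      intro j hj
      simp only [Finset.coe_Icc, Set.mem_Icc, Finset.mem_coe, Finset.mem_Icc] at hj ⊢
      have hj1 : 1 ≤ j := by omega
      have hj2 : j ≤ P.len := by omega
      have hA : dc P j ≤ r s := (cut s h2 j hj1 hj2).mp (by omega)
      have hB : ¬ (dc P j ≤ r (s - 1)) := by
        intro hc
        exact absurd ((cut (s - 1) (by omega) j hj1 hj2).mpr hc) (by omega)
      omega
    rw [← hcard, hfib]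
    apply Finset.sum_congr rfl
    intro t ht
    simp only [Finset.mem_Icc] at ht
    have ht1 : 1 ≤ t := by omega
    have ht2 : t ≤ k' := le_trans ht.2 (rmk s h2)
    rw [mult_fiber hiseq hiseqim ht1 ht2]
    congr 1
    ext j
    simp only [Finset.mem_filter, Finset.mem_Icc]
    constructor
    · rintro ⟨⟨hja, hjb⟩, hjc⟩
      refine ⟨⟨?_, ?_⟩, hjc⟩
      · by_contra hc
        have := (cut (s - 1) (by omega) j hja hjb).mp (by omega)
        omega
      · exact (cut s h2 j hja hjb).mpr (by omega)
    · rintro ⟨⟨hja, hjb⟩, hjc⟩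
      exact ⟨⟨by omega, by omega⟩, hjc⟩
  · -- boundary
    intro t ht1 ht2 hpar
    by_cases hrm : r m < t
    · exact Or.inr hrm
    · left
      push_neg at hrm
      obtain ⟨s, hs1, hs2, hs3, hs4⟩ := blockfind hr0 m t ht1 hrm
      rcases le_or_gt (t + 1) (r s) with hin | hout
      · exact ⟨s, hs1, hs2, hs3, hin⟩
      · exfalso
        have hrs : r s = t := by omega
        have hparit : Odd (iseq t) ↔ Odd (P.l (k s)) := by
          rw [parity s hs1 hs2 t hs3 hs4]
          simp [(kbnd s hs1 hs2).1]
        rcases le_or_gt (t + 1) (r m) with hin2 | hout2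
        · obtain ⟨s', hp1, hp2, hp3, hp4⟩ := blockfind hr0 m (t + 1) (by omega) hin2
          have hss' : s < s' := by
            by_contra h
            have := rmono s' s (by omega) hs2
            omega
          have hs'1 : s' = s + 1 := by
            by_contra h
            have : s < s' - 1 := by omega
            have := rstrict s (s' - 1) this (by omega)
            omega
          subst hs'1
          have hparit2 : Odd (iseq (t + 1)) ↔ Odd (P.l (k (s + 1))) := by
            rw [parity (s + 1) (by omega) hp2 (t + 1) (by simpa using hp3) hp4]
            simp [(kbnd (s + 1) (by omega) hp2).1]
          obtain ⟨hb1, hb2, hb3⟩ := kbnd s hs1 hs2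
          have hkss : k s < k (s + 1) := klt s (s + 1) (by omega) hp2
          have hstab : Odd (P.l (k s + 1)) ↔ Odd (P.l (k (s + 1))) := by
            apply parity_stable P (k (s + 1) - (k s + 1)) (k s + 1) (k (s + 1)) le_rfl
              (by omega) (by omega) (kbnd (s + 1) (by omega) hp2).2.1
            intro x hx ⟨hxa, hxb⟩
            have hg := gap (s + 1) (by omega) hp2 x hx hxb
            rw [Nat.add_sub_cancel] at hg
            omega
          have hanti := P.anti (k s) hb1
          rw [hparit, hparit2, ← hstab] at hpar
          rw [Nat.odd_iff] at hpar hb3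
          rw [Nat.odd_iff] at hpar
          omega
        · have hsm : s = m := by
            by_contra h
            have := rstrict s m (by omega) le_rfl
            omega
          subst hsm
          have hev : ¬ Odd (iseq (t + 1)) := evtail (t + 1) hout2 ht2
          rw [hparit] at hpar
          exact hev (hpar.mp lkm_odd)
  · -- keymin
    intro h1 hev
    by_contra hc
    push_neg at hc
    have hrm : r m = k' := le_antisymm (rmk m le_rfl) hc
    obtain ⟨hb1, hb2, _⟩ := kbnd m hm1 le_rfl
    have : iseq (dc P (k m)) = P.l (k m) := (dc_val hiseq hiseqim hb1 hb2).2.2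
    rw [← hr m hm1 le_rfl, hrm] at this
    rw [this] at hev
    exact hev lkm_odd
section Bridge

variable {P : PartitionData} {p q m k' : ℕ} {k iseq r : ℕ → ℕ}

lemma sum_forces {S : Finset ℕ} {g g' : ℕ → ℕ} {i : ℕ} (hi : i ∈ S)
    (hagree : ∀ x ∈ S, x ≠ i → g x = g' x)
    (hsum : ∑ x ∈ S, g x = ∑ x ∈ S, g' x) : g i = g' i := by
  rw [← Finset.add_sum_erase S g hi, ← Finset.add_sum_erase S g' hi] at hsum
  have : ∑ x ∈ S.erase i, g x = ∑ x ∈ S.erase i, g' x :=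
    Finset.sum_congr rfl
      (fun x hx => hagree x (Finset.mem_of_mem_erase hx) (Finset.ne_of_mem_erase hx))
  omega

lemma odd_sums_eq (T T' : SYD P p q) :
    ∑ i ∈ P.partsSet.filter (fun i => Odd i), T.f i
      = ∑ i ∈ P.partsSet.filter (fun i => Odd i), T'.f i := by
  have h1 := plus_sub_minus P T.f T.le_mult
  have h2 := plus_sub_minus P T'.f T'.le_mult
  rw [T.plus_eq, T.minus_eq] at h1
  rw [T'.plus_eq, T'.minus_eq] at h2
  have h3 : (∑ i ∈ P.partsSet.filter (fun i => Odd i), (T.f i : ℤ))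
      = ∑ i ∈ P.partsSet.filter (fun i => Odd i), (T'.f i : ℤ) := by omega
  rw [← Nat.cast_sum, ← Nat.cast_sum] at h3
  exact_mod_cast h3

lemma sum_blocks (h : ℕ → ℕ) (r : ℕ → ℕ) :
    ∀ n, (∀ a b, a ≤ b → b ≤ n → r a ≤ r b) →
      ∑ s ∈ Finset.Icc 1 n, ∑ t ∈ Finset.Ioc (r (s - 1)) (r s), h t
        = ∑ t ∈ Finset.Ioc (r 0) (r n), h t := by
  intro n
  induction n with
  | zero => simp
  | succ n ih =>
    intro hmono
    rw [Finset.sum_Icc_succ_top (by omega : 1 ≤ n + 1),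
      ih (fun a b hab hb => hmono a b hab (by omega)), Nat.add_sub_cancel]
    exact Finset.sum_Ioc_consecutive h (hmono 0 n (by omega) (by omega))
      (hmono n (n + 1) (by omega) le_rfl)

/-- Key regrouping: a sum over the odd parts equals the sum over odd blocks. -/
lemma odd_sum (S : Setup P m k' k iseq r)
    (hiseq : StrictAntiOn iseq (Set.Icc 1 k'))
    (hiseqim : (Finset.Icc 1 k').image iseq = P.partsSet)
    (hr0 : r 0 = 0) (g : ℕ → ℕ) :
    ∑ i ∈ P.partsSet.filter (fun i => Odd i), g i
      = ∑ s ∈ (Finset.Icc 1 m).filter (fun s => 1 ≤ k s ∧ Odd (P.l (k s))),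
          ∑ t ∈ Finset.Icc (r (s - 1) + 1) (r s), g (iseq t) := by
  classical
  have stepA : ∑ i ∈ P.partsSet.filter (fun i => Odd i), g i
      = ∑ t ∈ Finset.Icc 1 k', (if Odd (iseq t) then g (iseq t) else 0) := by
    rw [Finset.sum_filter, ← hiseqim, Finset.sum_image]
    intro x hx y hy hxy
    simp only [Finset.coe_Icc, Set.mem_Icc, Finset.mem_coe, Finset.mem_Icc] at hx hy
    exact iseq_inj hiseq hx hy hxy
  have hIcc : Finset.Icc 1 k' = Finset.Ioc 0 k' := by
    rw [← Finset.Icc_add_one_left_eq_Ioc, Nat.zero_add]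
  have stepB : ∑ t ∈ Finset.Icc 1 k', (if Odd (iseq t) then g (iseq t) else 0)
      = ∑ t ∈ Finset.Ioc (r 0) (r m), (if Odd (iseq t) then g (iseq t) else 0) := by
    rw [hIcc, ← Finset.sum_Ioc_consecutive _ (Nat.zero_le (r m)) S.rmk, hr0]
    have : ∑ t ∈ Finset.Ioc (r m) k', (if Odd (iseq t) then g (iseq t) else 0) = 0 := by
      apply Finset.sum_eq_zero
      intro t ht
      simp only [Finset.mem_Ioc] at ht
      rw [if_neg (S.evtail t ht.1 ht.2)]
    omega
  have stepC : ∑ t ∈ Finset.Ioc (r 0) (r m), (if Odd (iseq t) then g (iseq t) else 0)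
      = ∑ s ∈ Finset.Icc 1 m, ∑ t ∈ Finset.Ioc (r (s - 1)) (r s),
          (if Odd (iseq t) then g (iseq t) else 0) :=
    (sum_blocks _ r m (fun a b hab hb => S.rmono a b hab hb)).symm
  have stepD : ∀ s ∈ Finset.Icc 1 m,
      ∑ t ∈ Finset.Ioc (r (s - 1)) (r s), (if Odd (iseq t) then g (iseq t) else 0)
        = (if (1 ≤ k s ∧ Odd (P.l (k s))) then
            ∑ t ∈ Finset.Ioc (r (s - 1)) (r s), g (iseq t) else 0) := by
    intro s hs
    simp only [Finset.mem_Icc] at hs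
    by_cases hc : 1 ≤ k s ∧ Odd (P.l (k s))
    · rw [if_pos hc]
      apply Finset.sum_congr rfl
      intro t ht
      simp only [Finset.mem_Ioc] at ht
      rw [if_pos ((S.parity s hs.1 hs.2 t ht.1 ht.2).mpr hc)]
    · rw [if_neg hc]
      apply Finset.sum_eq_zero
      intro t ht
      simp only [Finset.mem_Ioc] at ht
      rw [if_neg (fun ho => hc ((S.parity s hs.1 hs.2 t ht.1 ht.2).mp ho))]
  rw [stepA, stepB, stepC, Finset.sum_congr rfl stepD, ← Finset.sum_filter]
  apply Finset.sum_congr rfl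
  intro s _
  rw [Finset.Icc_add_one_left_eq_Ioc]

/-- forward vertex map, tuple component -/
def mapA (k' : ℕ) (iseq : ℕ → ℕ) (T : SYD P p q) : ℕ → ℕ :=
  fun t => if 1 ≤ t ∧ t ≤ k' then T.f (iseq t) else 0

/-- forward vertex map, parameter component -/
def mapP (m k' : ℕ) (iseq r : ℕ → ℕ) (T : SYD P p q) : ℕ → ℕ :=
  fun s => if 1 ≤ s ∧ s ≤ m then
    ∑ t ∈ Finset.Icc (r (s - 1) + 1) (r s), mapA k' iseq T t else 0

lemma mapA_pos (T : SYD P p q) {t : ℕ} (h1 : 1 ≤ t) (h2 : t ≤ k') :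
    mapA k' iseq T t = T.f (iseq t) := if_pos ⟨h1, h2⟩

lemma mapA_blk (S : Setup P m k' k iseq r) (T : SYD P p q) {s t : ℕ}
    (hs1 : 1 ≤ s) (hs2 : s ≤ m) (ht : t ∈ Finset.Icc (r (s - 1) + 1) (r s)) :
    mapA k' iseq T t = T.f (iseq t) := by
  simp only [Finset.mem_Icc] at ht
  exact mapA_pos T (by omega) (le_trans ht.2 (le_trans (S.rmono s m hs2 le_rfl) S.rmk))

lemma blk_mem_range (S : Setup P m k' k iseq r) {s t : ℕ}
    (hs1 : 1 ≤ s) (hs2 : s ≤ m) (ht : t ∈ Finset.Icc (r (s - 1) + 1) (r s)) :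
    1 ≤ t ∧ t ≤ k' := by
  simp only [Finset.mem_Icc] at ht
  exact ⟨by omega, le_trans ht.2 (le_trans (S.rmono s m hs2 le_rfl) S.rmk)⟩

lemma mapP_pos (T : SYD P p q) {s : ℕ} (h1 : 1 ≤ s) (h2 : s ≤ m) :
    mapP m k' iseq r T s = ∑ t ∈ Finset.Icc (r (s - 1) + 1) (r s), mapA k' iseq T t :=
  if_pos ⟨h1, h2⟩

/-- the inverse vertex map -/
def invf (k' : ℕ) (iseq : ℕ → ℕ) (a : ℕ → ℕ) : ℕ → ℕ :=
  fun i => ∑ t ∈ Finset.Icc 1 k', if iseq t = i then a t else 0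

lemma invf_iseq (hiseq : StrictAntiOn iseq (Set.Icc 1 k')) (a : ℕ → ℕ) {t : ℕ}
    (h1 : 1 ≤ t) (h2 : t ≤ k') : invf k' iseq a (iseq t) = a t := by
  rw [invf, Finset.sum_eq_single_of_mem t (Finset.mem_Icc.mpr ⟨h1, h2⟩)]
  · rw [if_pos rfl]
  · intro u hu hne
    simp only [Finset.mem_Icc] at hu
    exact if_neg (fun he => hne (iseq_inj hiseq hu ⟨h1, h2⟩ he))

lemma invf_zero (hiseqim : (Finset.Icc 1 k').image iseq = P.partsSet) (a : ℕ → ℕ) {i : ℕ}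
    (hi : i ∉ P.partsSet) : invf k' iseq a i = 0 := by
  apply Finset.sum_eq_zero
  intro t ht
  simp only [Finset.mem_Icc] at ht
  exact if_neg (fun he => hi (by rw [← he]; exact iseq_mem hiseqim ht.1 ht.2))

lemma invf_le (hiseq : StrictAntiOn iseq (Set.Icc 1 k'))
    (hiseqim : (Finset.Icc 1 k').image iseq = P.partsSet) (a : ℕ → ℕ)
    (ha : ∀ t, 1 ≤ t → t ≤ k' → a t ≤ P.mult (iseq t)) :
    ∀ i, invf k' iseq a i ≤ P.mult i := by
  intro i
  by_cases hi : i ∈ P.partsSet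
  · obtain ⟨t, h1, h2, rfl⟩ := iseq_surj hiseqim hi
    rw [invf_iseq hiseq a h1 h2]
    exact ha t h1 h2
  · rw [invf_zero hiseqim a hi]
    exact Nat.zero_le _

lemma SYD_ext {T T' : SYD P p q} (h : T.f = T'.f) : T = T' := by
  cases T; cases T'
  simp only at h
  subst h
  rfl

lemma f_eq_off_parts (T T' : SYD P p q) {x : ℕ} (hx : x ∉ P.partsSet) :
    T.f x = T'.f x := by
  have h1 := T.le_mult x
  have h2 := T'.le_mult x
  rw [P.mult_eq_zero hx] at h1 h2
  omega

end Bridge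
section Vertex

variable {P : PartitionData} {p q m k' : ℕ} {k iseq r : ℕ → ℕ}

lemma mem_cond (S : Setup P m k' k iseq r)
    (hiseq : StrictAntiOn iseq (Set.Icc 1 k'))
    (hiseqim : (Finset.Icc 1 k').image iseq = P.partsSet)
    (hr0 : r 0 = 0) (T : SYD P p q) :
    mapP m k' iseq r T ∈ Pset P p q m k
      ∧ ZCond P k' m iseq r (mapP m k' iseq r T) (mapA k' iseq T) := by
  have hps : ∀ s ∈ (Finset.Icc 1 m).filter (fun s => 1 ≤ k s ∧ Odd (P.l (k s))),
      mapP m k' iseq r T s = ∑ t ∈ Finset.Icc (r (s - 1) + 1) (r s), T.f (iseq t) := by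
    intro s hs
    obtain ⟨hs1, _⟩ := Finset.mem_filter.mp hs
    obtain ⟨h1, h2⟩ := Finset.mem_Icc.mp hs1
    rw [mapP_pos T h1 h2]
    exact Finset.sum_congr rfl (fun t ht => mapA_blk S T h1 h2 ht)
  have hsum : ∑ s ∈ (Finset.Icc 1 m).filter (fun s => 1 ≤ k s ∧ Odd (P.l (k s))),
      mapP m k' iseq r T s = ∑ i ∈ P.partsSet.filter (fun i => Odd i), T.f i := by
    rw [Finset.sum_congr rfl hps, ← odd_sum S hiseq hiseqim hr0 T.f]
  have hpm := plus_sub_minus P T.f T.le_mult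
  rw [T.plus_eq, T.minus_eq] at hpm
  refine ⟨⟨fun s hs => if_neg hs, ?_, ?_⟩, fun t ht => if_neg ht,
    fun t h1 h2 => by rw [mapA_pos T h1 h2]; exact T.le_mult _,
    fun s h1 h2 => (mapP_pos T h1 h2).symm⟩
  · intro s h1 h2
    rw [mapP_pos T h1 h2, ← S.blocksum s h1 h2]
    exact Finset.sum_le_sum (fun t ht => by rw [mapA_blk S T h1 h2 ht]; exact T.le_mult _)
  · have hcast : (∑ s ∈ (Finset.Icc 1 m).filter (fun s => 1 ≤ k s ∧ Odd (P.l (k s))),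
        (mapP m k' iseq r T s : ℤ))
        = ∑ i ∈ P.partsSet.filter (fun i => Odd i), (T.f i : ℤ) := by
      rw [← Nat.cast_sum, ← Nat.cast_sum, hsum]
    omega

lemma build_SYD (S : Setup P m k' k iseq r)
    (hiseq : StrictAntiOn iseq (Set.Icc 1 k'))
    (hiseqim : (Finset.Icc 1 k').image iseq = P.partsSet)
    (hr0 : r 0 = 0) (hn : P.boxSum = p + q) (ps a : ℕ → ℕ)
    (hps : ps ∈ Pset P p q m k) (hz : ZCond P k' m iseq r ps a) :
    ∃ T : SYD P p q, T.f = invf k' iseq a := by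
  obtain ⟨hz1, hz2, hz3⟩ := hz
  obtain ⟨hp1, hp2, hp3⟩ := hps
  have hle : ∀ i, invf k' iseq a i ≤ P.mult i := invf_le hiseq hiseqim a hz2
  have hadd := plus_add_minus P (invf k' iseq a) hle
  rw [hn] at hadd
  have hsub := plus_sub_minus P (invf k' iseq a) hle
  have hos := odd_sum S hiseq hiseqim hr0 (invf k' iseq a)
  have hblk : ∀ s ∈ (Finset.Icc 1 m).filter (fun s => 1 ≤ k s ∧ Odd (P.l (k s))),
      ∑ t ∈ Finset.Icc (r (s - 1) + 1) (r s), invf k' iseq a (iseq t) = ps s := by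
    intro s hs
    obtain ⟨hs1, _⟩ := Finset.mem_filter.mp hs
    obtain ⟨h1, h2⟩ := Finset.mem_Icc.mp hs1
    rw [← hz3 s h1 h2]
    refine Finset.sum_congr rfl (fun t ht => ?_)
    obtain ⟨ha1, ha2⟩ := blk_mem_range S h1 h2 ht
    exact invf_iseq hiseq a ha1 ha2
  have h' : ∑ i ∈ P.partsSet.filter (fun i => Odd i), (invf k' iseq a i : ℤ)
      = ∑ s ∈ (Finset.Icc 1 m).filter (fun s => 1 ≤ k s ∧ Odd (P.l (k s))), (ps s : ℤ) := by
    rw [← Nat.cast_sum, ← Nat.cast_sum, hos, Finset.sum_congr rfl hblk]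
  rw [h'] at hsub
  have hS1 : ∑ i ∈ P.partsSet,
      (invf k' iseq a i * ((i + 1) / 2) + (P.mult i - invf k' iseq a i) * (i / 2)) = p := by
    omega
  have hS2 : ∑ i ∈ P.partsSet,
      (invf k' iseq a i * (i / 2) + (P.mult i - invf k' iseq a i) * ((i + 1) / 2)) = q := by
    omega
  exact ⟨⟨invf k' iseq a, hle, hS1, hS2⟩, rfl⟩

end Vertex
section Edges

variable {P : PartitionData} {p q m k' : ℕ} {k iseq r : ℕ → ℕ}

lemma blk_uniq (S : Setup P m k' k iseq r) {s s' t : ℕ} (hs2 : s ≤ m) (hs'2 : s' ≤ m)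
    (h1 : r (s - 1) < t) (h2 : t ≤ r s) (h1' : r (s' - 1) < t) (h2' : t ≤ r s') : s = s' := by
  by_contra hne
  rcases Nat.lt_or_ge s s' with h | h
  · have := S.rmono s (s' - 1) (by omega) (by omega)
    omega
  · have := S.rmono s' (s - 1) (by omega) (by omega)
    omega

lemma forward (S : Setup P m k' k iseq r)
    (hiseq : StrictAntiOn iseq (Set.Icc 1 k'))
    (hiseqim : (Finset.Icc 1 k').image iseq = P.partsSet)
    {T T' : SYD P p q} (h : AdjRel P 1 T T') :
    mapP m k' iseq r T = mapP m k' iseq r T'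
      ∧ MoveRel k' m r (mapA k' iseq T) (mapA k' iseq T') := by
  have hodd := odd_sums_eq T T'
  rcases h with ⟨i, j, hcon, hagree, hval⟩ | ⟨j, hmin, hagree, hval⟩
  · obtain ⟨hiP, hjP, hji, hbet⟩ := hcon
    obtain ⟨ti, hti1, hti2, htieq⟩ := iseq_surj hiseqim hiP
    obtain ⟨tj, htj1, htj2, htjeq⟩ := iseq_surj hiseqim hjP
    have htij : tj = ti + 1 := by
      have h1 : ti < tj := by
        by_contra hc
        have := iseq_le hiseq htj1 (by omega : tj ≤ ti) hti2
        omega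
      by_contra hc
      have h2 : ti + 1 < tj := by omega
      have hx1 : iseq tj < iseq (ti + 1) := iseq_lt hiseq (by omega) h2 htj2
      have hx2 : iseq (ti + 1) < iseq ti := iseq_lt hiseq hti1 (by omega) (by omega)
      exact hbet (iseq (ti + 1)) (iseq_mem hiseqim (by omega) (by omega)) (by omega)
    subst htij
    have hpar : (Odd i ↔ Odd j) := by
      by_cases hoi : Odd i <;> by_cases hoj : Odd j
      · exact iff_of_true hoi hoj
      · exfalso
        have hiS : i ∈ P.partsSet.filter (fun i => Odd i) :=
          Finset.mem_filter.mpr ⟨hiP, hoi⟩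
        have hagree' : ∀ x ∈ P.partsSet.filter (fun i => Odd i), x ≠ i → T.f x = T'.f x :=
          fun x hx hxi => hagree x hxi
            (fun hxj => hoj (by rw [← hxj]; exact (Finset.mem_filter.mp hx).2))
        have := sum_forces hiS hagree' hodd
        rcases hval with ⟨h1, h2⟩ | ⟨h1, h2⟩ <;> omega
      · exfalso
        have hjS : j ∈ P.partsSet.filter (fun i => Odd i) :=
          Finset.mem_filter.mpr ⟨hjP, hoj⟩
        have hagree' : ∀ x ∈ P.partsSet.filter (fun i => Odd i), x ≠ j → T.f x = T'.f x :=
          fun x hx hxj => hagree x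
            (fun hxi => hoi (by rw [← hxi]; exact (Finset.mem_filter.mp hx).2)) hxj
        have := sum_forces hjS hagree' hodd
        rcases hval with ⟨h1, h2⟩ | ⟨h1, h2⟩ <;> omega
      · exact iff_of_false hoi hoj
    have hbdy := S.boundary ti hti1 htj2 (by rw [htieq, htjeq]; exact hpar)
    have hAagree : ∀ x, x ≠ ti → x ≠ ti + 1 → mapA k' iseq T x = mapA k' iseq T' x := by
      intro x hx1 hx2
      by_cases hxr : 1 ≤ x ∧ x ≤ k'
      · rw [mapA_pos T hxr.1 hxr.2, mapA_pos T' hxr.1 hxr.2]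
        apply hagree
        · rw [← htieq]
          exact fun he => hx1 (iseq_inj hiseq hxr ⟨hti1, hti2⟩ he)
        · rw [← htjeq]
          exact fun he => hx2 (iseq_inj hiseq hxr ⟨htj1, htj2⟩ he)
      · rw [mapA, if_neg hxr, mapA, if_neg hxr]
    have hAval : (mapA k' iseq T ti = mapA k' iseq T' ti + 1
          ∧ mapA k' iseq T' (ti + 1) = mapA k' iseq T (ti + 1) + 1)
        ∨ (mapA k' iseq T' ti = mapA k' iseq T ti + 1
          ∧ mapA k' iseq T (ti + 1) = mapA k' iseq T' (ti + 1) + 1) := by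
      rw [mapA_pos T hti1 hti2, mapA_pos T htj1 htj2,
        mapA_pos T' hti1 hti2, mapA_pos T' htj1 htj2, htieq, htjeq]
      exact hval
    constructor
    · funext s
      by_cases hs : 1 ≤ s ∧ s ≤ m
      · rw [mapP_pos T hs.1 hs.2, mapP_pos T' hs.1 hs.2]
        rcases hbdy with ⟨s0, hs01, hs02, hs03, hs04⟩ | hrm
        · by_cases hss : s = s0
          · subst hss
            refine sum_eq_of_agree_two (Finset.mem_Icc.mpr ⟨by omega, by omega⟩)
              (Finset.mem_Icc.mpr ⟨by omega, by omega⟩) (by omega) hAagree ?_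
            rcases hAval with ⟨h1, h2⟩ | ⟨h1, h2⟩ <;> omega
          · refine Finset.sum_congr rfl (fun x hx => ?_)
            obtain ⟨hxa, hxb⟩ := Finset.mem_Icc.mp hx
            have hx1 : x ≠ ti := by
              intro he
              subst he
              exact hss (blk_uniq S hs.2 hs02 (by omega) hxb (by omega) (by omega))
            have hx2 : x ≠ ti + 1 := by
              intro he
              subst he
              exact hss (blk_uniq S hs.2 hs02 (by omega) hxb (by omega) (by omega))
            exact hAagree x hx1 hx2
        · refine Finset.sum_congr rfl (fun x hx => ?_)
          obtain ⟨hxa, hxb⟩ := Finset.mem_Icc.mp hx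
          have hxm : x ≤ r m := le_trans hxb (S.rmono s m hs.2 le_rfl)
          exact hAagree x (by omega) (by omega)
      · rw [mapP, if_neg hs, mapP, if_neg hs]
    · exact Or.inl ⟨ti, hti1, htj2, hbdy, hAagree, hAval⟩
  · obtain ⟨hjP, hjmin⟩ := hmin
    obtain ⟨tj, htj1, htj2, htjeq⟩ := iseq_surj hiseqim hjP
    have hk1 : 1 ≤ k' := by omega
    have hjeq : iseq k' = j := by
      have h1 : j ≤ iseq k' := hjmin _ (iseq_mem hiseqim hk1 le_rfl)
      have h2 : iseq k' ≤ iseq tj := iseq_le hiseq htj1 htj2 le_rfl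
      omega
    have hnoddj : ¬ Odd j := by
      intro ho
      have hjS : j ∈ P.partsSet.filter (fun i => Odd i) := Finset.mem_filter.mpr ⟨hjP, ho⟩
      have := sum_forces hjS (fun x _ hxj => hagree x hxj) hodd
      rcases hval with h | h <;> omega
    have hrm : r m < k' := S.keymin hk1 (by rw [hjeq]; exact hnoddj)
    have hAagree : ∀ x, x ≠ k' → mapA k' iseq T x = mapA k' iseq T' x := by
      intro x hx
      by_cases hxr : 1 ≤ x ∧ x ≤ k'
      · rw [mapA_pos T hxr.1 hxr.2, mapA_pos T' hxr.1 hxr.2]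
        apply hagree
        rw [← hjeq]
        exact fun he => hx (iseq_inj hiseq hxr ⟨hk1, le_rfl⟩ he)
      · rw [mapA, if_neg hxr, mapA, if_neg hxr]
    constructor
    · funext s
      by_cases hs : 1 ≤ s ∧ s ≤ m
      · rw [mapP_pos T hs.1 hs.2, mapP_pos T' hs.1 hs.2]
        refine Finset.sum_congr rfl (fun x hx => ?_)
        obtain ⟨hxa, hxb⟩ := Finset.mem_Icc.mp hx
        have hxm : x ≤ r m := le_trans hxb (S.rmono s m hs.2 le_rfl)
        exact hAagree x (by omega)
      · rw [mapP, if_neg hs, mapP, if_neg hs]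
    · refine Or.inr ⟨hrm, hAagree, ?_⟩
      rw [mapA_pos T hk1 le_rfl, mapA_pos T' hk1 le_rfl, hjeq]
      exact hval

lemma backward (S : Setup P m k' k iseq r)
    (hiseq : StrictAntiOn iseq (Set.Icc 1 k'))
    (hiseqim : (Finset.Icc 1 k').image iseq = P.partsSet)
    {T T' : SYD P p q}
    (h : MoveRel k' m r (mapA k' iseq T) (mapA k' iseq T')) : AdjRel P 1 T T' := by
  rcases h with ⟨t, ht1, ht2, _, hagree, hval⟩ | ⟨hrm, hagree, hval⟩
  · left
    refine ⟨iseq t, iseq (t + 1),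
      ⟨iseq_mem hiseqim ht1 (by omega), iseq_mem hiseqim (by omega) ht2,
        iseq_lt hiseq ht1 (by omega) ht2, ?_⟩, ?_, ?_⟩
    · intro x hxP hx
      obtain ⟨hx1, hx2⟩ := hx
      obtain ⟨u, hu1, hu2, rfl⟩ := iseq_surj hiseqim hxP
      have hut : t < u := by
        by_contra hc
        have := iseq_le hiseq hu1 (by omega : u ≤ t) (by omega)
        omega
      have hut2 : u < t + 1 := by
        by_contra hc
        have := iseq_le hiseq (by omega : 1 ≤ t + 1) (by omega : t + 1 ≤ u) hu2
        omega
      omega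
    · intro x hxi hxj
      by_cases hxP : x ∈ P.partsSet
      · obtain ⟨u, hu1, hu2, rfl⟩ := iseq_surj hiseqim hxP
        have h1 : u ≠ t := fun he => hxi (by rw [he])
        have h2 : u ≠ t + 1 := fun he => hxj (by rw [he])
        have := hagree u h1 h2
        rwa [mapA_pos T hu1 hu2, mapA_pos T' hu1 hu2] at this
      · exact f_eq_off_parts T T' hxP
    · rw [mapA_pos T ht1 (by omega), mapA_pos T (by omega) ht2,
        mapA_pos T' ht1 (by omega), mapA_pos T' (by omega) ht2] at hval
      exact hval
  · right
    have hk1 : 1 ≤ k' := by omega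
    refine ⟨iseq k', ⟨iseq_mem hiseqim hk1 le_rfl, ?_⟩, ?_, ?_⟩
    · intro x hxP
      obtain ⟨u, hu1, hu2, rfl⟩ := iseq_surj hiseqim hxP
      exact iseq_le hiseq hu1 hu2 le_rfl
    · intro x hx
      by_cases hxP : x ∈ P.partsSet
      · obtain ⟨u, hu1, hu2, rfl⟩ := iseq_surj hiseqim hxP
        have h1 : u ≠ k' := fun he => hx (by rw [he])
        have := hagree u h1
        rwa [mapA_pos T hu1 hu2, mapA_pos T' hu1 hu2] at this
      · exact f_eq_off_parts T T' hxP
    · rw [mapA_pos T hk1 le_rfl, mapA_pos T' hk1 le_rfl] at hval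
      exact hval

end Edges
/-- The orbit graph `Γ(λ;p,q)` is isomorphic to the disjoint union over
`𝐩 ∈ P(λ;p,q)` of the products `Z_𝐩` of the graphs `A` and `C`.  Here
`i_1 > ⋯ > i_{k'}` are the distinct parts (enumerated by `iseq`), and
`r_s` is the number of distinct values among `λ_1, …, λ_{k_s}`.  The disjoint
union of products is realized as the graph on pairs `(𝐩, a)` with `𝐩 ∈ P(λ;p,q)`
and `a` a vertex of `Z_𝐩`, two pairs being adjacent iff they have the same `𝐩`
and their tuples differ by an allowed move. -/
theorem stmt6 (P : PartitionData) (p q m k' : ℕ) (k iseq r : ℕ → ℕ)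
    (hn : P.boxSum = p + q) (hk0 : k 0 = 0)
    (hk : (Kset P = ∅ ∧ m = 1 ∧ k 1 = 0) ∨
      (Kset P ≠ ∅ ∧ StrictMonoOn k (Set.Icc 0 m) ∧
        (Finset.Icc 1 m).image k = Kset P))
    (hiseq : StrictAntiOn iseq (Set.Icc 1 k'))
    (hiseqim : (Finset.Icc 1 k').image iseq = P.partsSet)
    (hr0 : r 0 = 0)
    (hr : ∀ s, 1 ≤ s → s ≤ m → r s = ((Finset.Icc 1 (k s)).image P.l).card) :
    Nonempty
      (orbitGraph P p q ≃g
        SimpleGraph.fromRel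
          (fun (x y : {pa : (ℕ → ℕ) × (ℕ → ℕ) //
              pa.1 ∈ Pset P p q m k ∧ ZCond P k' m iseq r pa.1 pa.2}) =>
            x.1.1 = y.1.1 ∧ MoveRel k' m r x.1.2 y.1.2)) := by
  classical
  have S : Setup P m k' k iseq r := by
    rcases hk with ⟨he, hm, hk1⟩ | ⟨hne, hkm, hkim⟩
    · exact setup_empty hiseq hiseqim hr0 hr hk0 he hm hk1
    · exact setup_nonempty hiseq hiseqim hr0 hr hk0 hne hkm hkim
  let F : SYD P p q → {pa : (ℕ → ℕ) × (ℕ → ℕ) //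
      pa.1 ∈ Pset P p q m k ∧ ZCond P k' m iseq r pa.1 pa.2} :=
    fun T => ⟨(mapP m k' iseq r T, mapA k' iseq T), mem_cond S hiseq hiseqim hr0 T⟩
  have hinj : Function.Injective F := by
    intro T T' he
    have ha : mapA k' iseq T = mapA k' iseq T' :=
      congrArg (fun v => v.1.2) he
    apply SYD_ext
    funext i
    by_cases hi : i ∈ P.partsSet
    · obtain ⟨t, h1, h2, rfl⟩ := iseq_surj hiseqim hi
      have := congrFun ha t
      rwa [mapA_pos T h1 h2, mapA_pos T' h1 h2] at this
    · exact f_eq_off_parts T T' hi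
  have hsurj : Function.Surjective F := by
    rintro ⟨⟨ps, a⟩, hps, hz⟩
    dsimp only at hps hz
    obtain ⟨T, hT⟩ := build_SYD S hiseq hiseqim hr0 hn ps a hps hz
    refine ⟨T, Subtype.ext ?_⟩
    have hA : mapA k' iseq T = a := by
      funext t
      by_cases ht : 1 ≤ t ∧ t ≤ k'
      · rw [mapA_pos T ht.1 ht.2, hT, invf_iseq hiseq a ht.1 ht.2]
      · rw [mapA, if_neg ht]
        exact (hz.1 t ht).symm
    have hP : mapP m k' iseq r T = ps := by
      funext s
      by_cases hs : 1 ≤ s ∧ s ≤ m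
      · rw [mapP_pos T hs.1 hs.2, ← hz.2.2 s hs.1 hs.2]
        refine Finset.sum_congr rfl (fun t ht => ?_)
        obtain ⟨h1, h2⟩ := blk_mem_range S hs.1 hs.2 ht
        rw [mapA_pos T h1 h2, hT, invf_iseq hiseq a h1 h2]
      · rw [mapP, if_neg hs]
        exact (hps.1 s hs).symm
    show (mapP m k' iseq r T, mapA k' iseq T) = (ps, a)
    rw [hA, hP]
  let e := Equiv.ofBijective F ⟨hinj, hsurj⟩
  refine ⟨⟨e, @fun a b => ?_⟩⟩
  rw [orbitGraph, SimpleGraph.fromRel_adj, SimpleGraph.fromRel_adj]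
  constructor
  · rintro ⟨hne, hrel⟩
    refine ⟨fun hab => hne (by rw [hab]), ?_⟩
    rcases hrel with ⟨hps, hmv⟩ | ⟨hps, hmv⟩
    · exact Or.inl (backward S hiseq hiseqim hmv)
    · exact Or.inr (backward S hiseq hiseqim hmv)
  · rintro ⟨hne, hrel⟩
    refine ⟨fun he' => hne (e.injective he'), ?_⟩
    rcases hrel with h | h
    · exact Or.inl (forward S hiseq hiseqim h)
    · exact Or.inr (forward S hiseq hiseqim h)
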